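/- The polynomial p(t) = 17464t⁶ - 288576t⁵ + 7502108t⁴ - 53765156t³ + 1128363667t² + 54275974t - 1133336585 over ℝ has exactly two real roots α₁, α₂, and they satisfy α₁ < 0 < α₂ < 2. -/

import Mathlib

/-- The dehomogenized discriminant polynomial of the quadric surface bundle in
Example 1.5. -/
def stmt18Poly (t : ℝ) : ℝ :=
  17464 * t ^ 6 - 288576 * t ^ 5 + 7502108 * t ^ 4 - 53765156 * t ^ 3
    + 1128363667 * t ^ 2 + 54275974 * t - 1133336585

private lemma stmt18_hasDerivAt (t : ℝ) :
    HasDerivAt stmt18Poly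
      (104784 * t ^ 5 - 1442880 * t ^ 4 + 30008432 * t ^ 3 - 161295468 * t ^ 2
        + 2256727334 * t + 54275974) t := by
  have h :=
    (((((((hasDerivAt_pow 6 t).const_mul (17464 : ℝ)).sub
      ((hasDerivAt_pow 5 t).const_mul (288576 : ℝ))).add
      ((hasDerivAt_pow 4 t).const_mul (7502108 : ℝ))).sub
      ((hasDerivAt_pow 3 t).const_mul (53765156 : ℝ))).add
      ((hasDerivAt_pow 2 t).const_mul (1128363667 : ℝ))).add
      ((hasDerivAt_id t).const_mul (54275974 : ℝ))).sub_const (1133336585 : ℝ)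
  have he : stmt18Poly = fun t : ℝ =>
      17464 * t ^ 6 - 288576 * t ^ 5 + 7502108 * t ^ 4 - 53765156 * t ^ 3
        + 1128363667 * t ^ 2 + 54275974 * t - 1133336585 := rfl
  rw [he]
  refine h.congr_deriv ?_
  norm_num; ring

private lemma stmt18_deriv :
    deriv stmt18Poly = fun t : ℝ =>
      104784 * t ^ 5 - 1442880 * t ^ 4 + 30008432 * t ^ 3 - 161295468 * t ^ 2
        + 2256727334 * t + 54275974 := by
  funext t; exact (stmt18_hasDerivAt t).deriv

private lemma stmt18_hasDerivAt2 (t : ℝ) :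
    HasDerivAt (fun t : ℝ =>
      104784 * t ^ 5 - 1442880 * t ^ 4 + 30008432 * t ^ 3 - 161295468 * t ^ 2
        + 2256727334 * t + 54275974)
      (523920 * t ^ 4 - 5771520 * t ^ 3 + 90025296 * t ^ 2 - 322590936 * t
        + 2256727334) t := by
  have h :=
    ((((((hasDerivAt_pow 5 t).const_mul (104784 : ℝ)).sub
      ((hasDerivAt_pow 4 t).const_mul (1442880 : ℝ))).add
      ((hasDerivAt_pow 3 t).const_mul (30008432 : ℝ))).sub
      ((hasDerivAt_pow 2 t).const_mul (161295468 : ℝ))).add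
      ((hasDerivAt_id t).const_mul (2256727334 : ℝ))).add_const (54275974 : ℝ)
  refine h.congr_deriv ?_
  norm_num; ring

private lemma stmt18_convex : StrictConvexOn ℝ Set.univ stmt18Poly := by
  apply strictConvexOn_of_deriv2_pos convex_univ
  · have : Continuous stmt18Poly := by unfold stmt18Poly; continuity
    exact this.continuousOn
  · intro x _
    have h2 : deriv (deriv stmt18Poly) x =
        523920 * x ^ 4 - 5771520 * x ^ 3 + 90025296 * x ^ 2 - 322590936 * x
          + 2256727334 := by
      rw [stmt18_deriv]; exact (stmt18_hasDerivAt2 x).deriv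
    show 0 < deriv^[2] stmt18Poly x
    rw [Function.iterate_succ, Function.iterate_one, Function.comp_apply, h2]
    nlinarith [sq_nonneg (2183 * x ^ 2 - 12024 * x), sq_nonneg (13485570244 * x - 29342333887), sq_nonneg x, sq_nonneg (x - 1)]

private lemma stmt18_three_roots {x y z : ℝ} (hxy : x < y) (hyz : y < z)
    (hx : stmt18Poly x = 0) (hy : stmt18Poly y = 0) (hz : stmt18Poly z = 0) : False := by
  have hxz : x < z := hxy.trans hyz
  have ha : (0:ℝ) < (z - y) / (z - x) := div_pos (by linarith) (by linarith)
  have hb : (0:ℝ) < (y - x) / (z - x) := div_pos (by linarith) (by linarith)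
  have hab : (z - y) / (z - x) + (y - x) / (z - x) = 1 := by
    rw [← add_div]
    have hzx : z - y + (y - x) = z - x := by ring
    rw [hzx]
    exact div_self (by linarith)
  have h := stmt18_convex.2 (Set.mem_univ x) (Set.mem_univ z) hxz.ne ha hb hab
  have hyeq : ((z - y) / (z - x)) • x + ((y - x) / (z - x)) • z = y := by
    simp only [smul_eq_mul, div_mul_eq_mul_div, ← add_div]
    rw [show (z - y) * x + (y - x) * z = y * (z - x) by ring, mul_div_assoc,
      div_self (by linarith : z - x ≠ 0), mul_one]
  rw [hyeq, hx, hz] at h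
  simp [hy] at h

/-- `stmt18Poly` has exactly two real roots `α₁, α₂`, with `α₁ < 0 < α₂ < 2`. -/
theorem stmt18 :
    ∃ α₁ α₂ : ℝ, α₁ < 0 ∧ 0 < α₂ ∧ α₂ < 2 ∧
      (∀ t : ℝ, stmt18Poly t = 0 ↔ t = α₁ ∨ t = α₂) := by
  have hcont : Continuous stmt18Poly := by unfold stmt18Poly; continuity
  have hm1 : stmt18Poly (-1) = 2324412 := by norm_num [stmt18Poly]
  have h0 : stmt18Poly 0 = -1133336585 := by norm_num [stmt18Poly]
  have h1 : stmt18Poly 1 = 2768896 := by norm_num [stmt18Poly]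
  obtain ⟨α₁, hα₁mem, hα₁⟩ : ∃ x ∈ Set.Icc (-1:ℝ) 0, stmt18Poly x = 0 := by
    have := intermediate_value_Icc' (by norm_num : (-1:ℝ) ≤ 0) hcont.continuousOn
      (by rw [hm1, h0]; constructor <;> norm_num : (0:ℝ) ∈ Set.Icc (stmt18Poly 0) (stmt18Poly (-1)))
    obtain ⟨x, hx, hx0⟩ := this
    exact ⟨x, hx, hx0⟩
  obtain ⟨α₂, hα₂mem, hα₂⟩ : ∃ x ∈ Set.Icc (0:ℝ) 1, stmt18Poly x = 0 := by
    have := intermediate_value_Icc (by norm_num : (0:ℝ) ≤ 1) hcont.continuousOn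
      (by rw [h0, h1]; constructor <;> norm_num : (0:ℝ) ∈ Set.Icc (stmt18Poly 0) (stmt18Poly 1))
    obtain ⟨x, hx, hx0⟩ := this
    exact ⟨x, hx, hx0⟩
  have hα₁0 : α₁ < 0 := by
    rcases lt_or_eq_of_le hα₁mem.2 with h | h
    · exact h
    · exfalso; rw [h, h0] at hα₁; norm_num at hα₁
  have h0α₂ : 0 < α₂ := by
    rcases lt_or_eq_of_le hα₂mem.1 with h | h
    · exact h
    · exfalso; rw [← h, h0] at hα₂; norm_num at hα₂
  have hα₂2 : α₂ < 2 := lt_of_le_of_lt hα₂mem.2 (by norm_num)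
  refine ⟨α₁, α₂, hα₁0, h0α₂, hα₂2, fun t => ⟨fun ht => ?_, fun ht => ?_⟩⟩
  · by_contra hne
    push_neg at hne
    obtain ⟨hne₁, hne₂⟩ := hne
    have h12 : α₁ < α₂ := hα₁0.trans h0α₂
    rcases lt_trichotomy t α₁ with h | h | h
    · exact stmt18_three_roots h h12 ht hα₁ hα₂
    · exact hne₁ h
    · rcases lt_trichotomy t α₂ with h' | h' | h'
      · exact stmt18_three_roots h h' hα₁ ht hα₂
      · exact hne₂ h'
      · exact stmt18_three_roots h12 h' hα₁ hα₂ ht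
  · rcases ht with h | h <;> rw [h] <;> assumption
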